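/- For a structurally non-Zeno discrete TMDP, the β-iteration stabilizes after |S| steps, and β^{|S|}(s) equals the least total duration over all strategies of player P_n of a path prefix from s satisfying Φ₁ U Φ₂ guaranteed against all strategies of P_p (with value ∞ if no such strategy exists). -/

import Mathlib

open scoped Classical

/-- A finite path of a discrete TMDP (used to state structural non-Zenoness). -/
def IsTMDPPath {S : Type*} (trans : Set (S × ℕ × PMF S)) :
    ∀ n : ℕ, (Fin (n + 1) → S) → (Fin n → ℕ) → Prop :=
  fun n p d =>
    ∀ k : Fin n, ∃ ν : PMF S, (p k.castSucc, d k, ν) ∈ trans ∧ p k.succ ∈ ν.support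

/-- The value iteration `β^i`. -/
noncomputable def betaIter {S : Type*} (trans : Set (S × ℕ × PMF S))
    (Φ₁ Φ₂ : S → Prop) : ℕ → S → ℕ∞
  | 0, s => if Φ₂ s then 0 else ⊤
  | i + 1, s =>
    if Φ₂ s then 0
    else if ¬ Φ₁ s then ⊤
    else ⨅ (d : ℕ) (ν : PMF S) (_ : (s, d, ν) ∈ trans),
      ((d : ℕ∞) + ⨆ s' ∈ ν.support, betaIter trans Φ₁ Φ₂ i s')

/-- `NEnsure trans Φ₁ Φ₂ s D`: in the turn-based game where player `P_n` chooses a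
transition `(s,d,ν) ∈ trans` and player `P_p` adversarially chooses a successor in the
support of `ν` (the round having duration `d`), player `P_n` has a strategy guaranteeing,
against all strategies of `P_p`, a path prefix from `s` satisfying `Φ₁ U Φ₂` of total
duration at most `D`. -/
inductive NEnsure {S : Type*} (trans : Set (S × ℕ × PMF S)) (Φ₁ Φ₂ : S → Prop) :
    S → ℕ → Prop
  | done (s : S) (D : ℕ) : Φ₂ s → NEnsure trans Φ₁ Φ₂ s D
  | step (s : S) (D : ℕ) (d : ℕ) (ν : PMF S) : Φ₁ s → (s, d, ν) ∈ trans → d ≤ D →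
      (∀ s' ∈ ν.support, NEnsure trans Φ₁ Φ₂ s' (D - d)) →
      NEnsure trans Φ₁ Φ₂ s D

section Aux
variable {S : Type*} (trans : Set (S × ℕ × PMF S)) (Φ₁ Φ₂ : S → Prop)

noncomputable def Fop (f : S → ℕ∞) (s : S) : ℕ∞ :=
  if Φ₂ s then 0
  else if ¬ Φ₁ s then ⊤
  else ⨅ (d : ℕ) (ν : PMF S) (_ : (s, d, ν) ∈ trans),
    ((d : ℕ∞) + ⨆ s' ∈ ν.support, f s')

lemma betaIter_succ (i : ℕ) (s : S) :
    betaIter trans Φ₁ Φ₂ (i + 1) s = Fop trans Φ₁ Φ₂ (betaIter trans Φ₁ Φ₂ i) s := rfl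

lemma Fop_mono {f g : S → ℕ∞} (h : ∀ s, f s ≤ g s) (s : S) :
    Fop trans Φ₁ Φ₂ f s ≤ Fop trans Φ₁ Φ₂ g s := by
  by_cases h2 : Φ₂ s
  · simp [Fop, h2]
  by_cases h1 : Φ₁ s
  · simp only [Fop, h2, h1, if_false, if_true, not_true, if_neg, not_false_iff]
    exact iInf_mono fun d => iInf_mono fun ν => iInf_mono fun _ =>
      add_le_add_right (iSup_mono fun s' => iSup_mono fun _ => h s') _
  · simp [Fop, h2, h1]

lemma beta_anti_succ (i : ℕ) (s : S) :
    betaIter trans Φ₁ Φ₂ (i + 1) s ≤ betaIter trans Φ₁ Φ₂ i s := by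
  induction i generalizing s with
  | zero =>
    rw [betaIter_succ]
    unfold Fop betaIter
    split_ifs with h1 h2 <;> simp
  | succ i ih =>
    rw [betaIter_succ, betaIter_succ]
    exact Fop_mono _ _ _ ih s

lemma beta_anti {i j : ℕ} (h : i ≤ j) (s : S) :
    betaIter trans Φ₁ Φ₂ j s ≤ betaIter trans Φ₁ Φ₂ i s := by
  induction j with
  | zero => simp_all
  | succ j ih =>
    rcases Nat.lt_or_ge i (j+1) with h' | h'
    · exact le_trans (beta_anti_succ trans Φ₁ Φ₂ j s) (ih (by omega))
    · have : i = j + 1 := by omega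
      subst this; exact le_rfl

lemma exists_stab [Fintype S] :
    ∃ I, ∀ j, I ≤ j → ∀ s, betaIter trans Φ₁ Φ₂ j s = betaIter trans Φ₁ Φ₂ I s := by
  have point : ∀ s : S, ∃ i, ∀ j, i ≤ j → betaIter trans Φ₁ Φ₂ j s = betaIter trans Φ₁ Φ₂ i s := by
    intro s
    obtain ⟨x, hxmem, hmin⟩ := wellFounded_lt.has_min
      (Set.range fun i => betaIter trans Φ₁ Φ₂ i s) ⟨_, ⟨0, rfl⟩⟩
    obtain ⟨i, hx⟩ := hxmem
    refine ⟨i, fun j hj => le_antisymm (beta_anti trans Φ₁ Φ₂ hj s) ?_⟩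
    have := not_lt.1 (hmin _ ⟨j, rfl⟩)
    simp only at hx this
    rw [hx]; exact this
  choose f hf using point
  refine ⟨Finset.univ.sup f, fun j hj s => ?_⟩
  have h1 : f s ≤ Finset.univ.sup f := Finset.le_sup (Finset.mem_univ s)
  rw [hf s j (le_trans h1 hj), hf s _ h1]


lemma enat_sub_arith (a D : ℕ) (x : ℕ∞) (h : (a:ℕ∞) + x ≤ D) : x ≤ ((D - a : ℕ) : ℕ∞) := by
  induction x using ENat.recTopCoe with
  | top => simp at h
  | coe m =>
    have : a + m ≤ D := by exact_mod_cast h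
    exact_mod_cast by omega

lemma attained (g : S → ℕ∞) (s : S) (htotal : ∃ d ν, (s, d, ν) ∈ trans) :
    ∃ d ν, (s, d, ν) ∈ trans ∧
      ((d : ℕ∞) + ⨆ s' ∈ ν.support, g s')
        = ⨅ (d : ℕ) (ν : PMF S) (_ : (s, d, ν) ∈ trans), ((d : ℕ∞) + ⨆ s' ∈ ν.support, g s') := by
  set A : Set ℕ∞ := {x | ∃ d ν, (s, d, ν) ∈ trans ∧ x = (d : ℕ∞) + ⨆ s' ∈ ν.support, g s'} with hA
  obtain ⟨d₀, ν₀, h₀⟩ := htotal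
  obtain ⟨x, hxmem, hmin⟩ := wellFounded_lt.has_min A ⟨_, d₀, ν₀, h₀, rfl⟩
  obtain ⟨d, ν, hd, hx⟩ := hxmem
  refine ⟨d, ν, hd, le_antisymm ?_ ?_⟩
  · exact le_iInf fun d' => le_iInf fun ν' => le_iInf fun h' => by
      rw [← hx]
      exact not_lt.1 (hmin _ ⟨d', ν', h', rfl⟩)
  · exact iInf_le_of_le d (iInf_le_of_le ν (iInf_le_of_le hd le_rfl))

end Aux

section Aux2
variable {S : Type*} {trans : Set (S × ℕ × PMF S)} {Φ₁ Φ₂ : S → Prop}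

lemma ensure_of_beta (htotal : ∀ s : S, ∃ d ν, (s, d, ν) ∈ trans) :
    ∀ (i : ℕ) (s : S) (D : ℕ), betaIter trans Φ₁ Φ₂ i s ≤ (D : ℕ∞) →
      NEnsure trans Φ₁ Φ₂ s D := by
  intro i
  induction i with
  | zero =>
    intro s D h
    by_cases hΦ : Φ₂ s
    · exact .done _ _ hΦ
    · simp [betaIter, hΦ] at h
  | succ i ih =>
    intro s D h
    by_cases hΦ2 : Φ₂ s
    · exact .done _ _ hΦ2
    by_cases hΦ1 : Φ₁ s
    · rw [betaIter_succ] at h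
      simp only [Fop, hΦ2, hΦ1, if_false, not_true_eq_false, if_true] at h
      obtain ⟨d, ν, hd, heq⟩ := attained trans (betaIter trans Φ₁ Φ₂ i) s (htotal s)
      rw [← heq] at h
      have hd' : (d:ℕ∞) ≤ (D:ℕ∞) :=
        le_trans (le_add_right le_rfl) h
      have hdD : d ≤ D := by exact_mod_cast hd'
      refine .step s D d ν hΦ1 hd hdD fun s' hs' => ?_
      refine ih s' (D - d) (enat_sub_arith d D _ (le_trans ?_ h))
      have hss : betaIter trans Φ₁ Φ₂ i s' ≤ ⨆ s' ∈ ν.support, betaIter trans Φ₁ Φ₂ i s' :=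
        le_iSup₂_of_le s' hs' le_rfl
      exact add_le_add_right hss _
    · rw [betaIter_succ] at h
      simp [Fop, hΦ2, hΦ1] at h

lemma g_le_of_ensure {g : S → ℕ∞} (g_le0 : ∀ s, g s ≤ betaIter trans Φ₁ Φ₂ 0 s)
    (gfix : ∀ s, Fop trans Φ₁ Φ₂ g s = g s)
    {s : S} {D : ℕ} (h : NEnsure trans Φ₁ Φ₂ s D) : g s ≤ (D : ℕ∞) := by
  induction h with
  | done s D h2 =>
    calc g s ≤ betaIter trans Φ₁ Φ₂ 0 s := g_le0 s
    _ = 0 := by simp [betaIter, h2]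
    _ ≤ D := zero_le'
  | step s D d ν h1 htr hdD hsup ih =>
    rw [← gfix s]
    by_cases hΦ2 : Φ₂ s
    · simp [Fop, hΦ2]
    simp only [Fop, hΦ2, h1, if_false, not_true_eq_false, if_true]
    refine le_trans (iInf_le_of_le d (iInf_le_of_le ν (iInf_le_of_le htr le_rfl))) ?_
    have hsub : (⨆ s' ∈ ν.support, g s') ≤ ((D - d : ℕ) : ℕ∞) :=
      iSup₂_le fun s' hs' => ih s' hs'
    calc (d : ℕ∞) + ⨆ s' ∈ ν.support, g s' ≤ (d : ℕ∞) + ((D - d : ℕ) : ℕ∞) :=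
          add_le_add_right hsub _
    _ = ((d + (D - d) : ℕ) : ℕ∞) := by push_cast; ring
    _ = (D : ℕ∞) := by congr 1; omega

end Aux2

section Paths
variable {S : Type*} {trans : Set (S × ℕ × PMF S)} {Φ₁ Φ₂ : S → Prop}

def GoodPath (trans : Set (S × ℕ × PMF S)) (g : S → ℕ∞) (m : ℕ) (p : ℕ → S) (dd : ℕ → ℕ) : Prop :=
  (∀ k < m, ∃ ν : PMF S, (p k, dd k, ν) ∈ trans ∧ p (k + 1) ∈ ν.support) ∧
  (∀ k < m, (dd k : ℕ∞) + g (p (k + 1)) ≤ g (p k))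

lemma GoodPath.telescope {g : S → ℕ∞} {m : ℕ} {p : ℕ → S} {dd : ℕ → ℕ}
    (h : GoodPath trans g m p dd) :
    ∀ a b, a ≤ b → b ≤ m → ((∑ k ∈ Finset.Ico a b, dd k : ℕ) : ℕ∞) + g (p b) ≤ g (p a) := by
  intro a b hab hbm
  induction b, hab using Nat.le_induction with
  | base => simp
  | succ b hab ih =>
    have hbm' : b ≤ m := by omega
    have step := h.2 b (by omega)
    calc ((∑ k ∈ Finset.Ico a (b + 1), dd k : ℕ) : ℕ∞) + g (p (b + 1))
        = ((∑ k ∈ Finset.Ico a b, dd k : ℕ) : ℕ∞) + ((dd b : ℕ∞) + g (p (b + 1))) := by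
          rw [Finset.sum_Ico_succ_top hab]; push_cast; ring
      _ ≤ ((∑ k ∈ Finset.Ico a b, dd k : ℕ) : ℕ∞) + g (p b) := add_le_add_right step _
      _ ≤ g (p a) := ih hbm'

lemma GoodPath.mono_g {g : S → ℕ∞} {m : ℕ} {p : ℕ → S} {dd : ℕ → ℕ}
    (h : GoodPath trans g m p dd) {a b : ℕ} (hab : a ≤ b) (hbm : b ≤ m) :
    g (p b) ≤ g (p a) :=
  le_trans (le_add_left le_rfl) (h.telescope a b hab hbm)

lemma GoodPath.inj {g : S → ℕ∞} {m : ℕ} {p : ℕ → S} {dd : ℕ → ℕ}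
    (hNZ : ∀ (n : ℕ) (p : Fin (n + 1) → S) (d : Fin n → ℕ), 0 < n →
      IsTMDPPath trans n p d → p 0 = p (Fin.last n) → 0 < ∑ k, d k)
    (h : GoodPath trans g m p dd) (hg0 : g (p 0) ≠ ⊤) :
    ∀ a b, a ≤ m → b ≤ m → p a = p b → a = b := by
  have key : ∀ a b, a < b → b ≤ m → p a ≠ p b := by
    intro a b hab hbm hpq
    set q : Fin (b - a + 1) → S := fun k => p (a + k) with hq
    set dq : Fin (b - a) → ℕ := fun k => dd (a + k) with hdq
    have hpath : IsTMDPPath trans (b - a) q dq := by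
      intro k
      have hk : a + (k : ℕ) < b := by omega
      obtain ⟨ν, h1, h2⟩ := h.1 (a + k) (by omega)
      refine ⟨ν, ?_, ?_⟩
      · simpa [hq, hdq, Fin.coe_castSucc] using h1
      · simpa [hq, Fin.val_succ, Nat.add_assoc] using h2
    have hcyc : q 0 = q (Fin.last (b - a)) := by
      simp only [hq, Fin.val_last, Fin.val_zero, Nat.add_zero]
      rw [Nat.add_sub_cancel' (le_of_lt hab)]
      exact hpq
    have hpos := hNZ (b - a) q dq (by omega) hpath hcyc
    have hsum : (∑ k, dq k) = ∑ k ∈ Finset.Ico a b, dd k := by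
      rw [Finset.sum_Ico_eq_sum_range]
      exact Fin.sum_univ_eq_sum_range (fun k => dd (a + k)) (b - a)
    have htel := h.telescope a b (le_of_lt hab) hbm
    rw [← hpq] at htel
    have hga : g (p a) ≠ ⊤ := by
      intro hh
      exact hg0 (top_le_iff.1 (hh ▸ h.mono_g (Nat.zero_le a) (by omega)))
    have hposC : (0 : ℕ∞) < ((∑ k ∈ Finset.Ico a b, dd k : ℕ) : ℕ∞) := by
      exact_mod_cast hsum ▸ hpos
    have : g (p a) < ((∑ k ∈ Finset.Ico a b, dd k : ℕ) : ℕ∞) + g (p a) := by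
      conv_lhs => rw [← zero_add (g (p a))]
      exact WithTop.add_lt_add_right hga hposC
    exact absurd (lt_of_lt_of_le this htel) (lt_irrefl _)
  intro a b ham hbm hpq
  rcases lt_trichotomy a b with h' | h' | h'
  · exact absurd hpq (key a b h' hbm)
  · exact h'
  · exact absurd hpq.symm (key b a h' ham)

lemma GoodPath.card_bound [Fintype S] {g : S → ℕ∞} {m : ℕ} {p : ℕ → S} {dd : ℕ → ℕ}
    (hNZ : ∀ (n : ℕ) (p : Fin (n + 1) → S) (d : Fin n → ℕ), 0 < n →
      IsTMDPPath trans n p d → p 0 = p (Fin.last n) → 0 < ∑ k, d k)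
    (h : GoodPath trans g m p dd) (hg0 : g (p 0) ≠ ⊤) :
    m + 1 ≤ Fintype.card S := by
  have hinj : Function.Injective (fun k : Fin (m + 1) => p k) := by
    intro a b hab
    exact Fin.ext (h.inj hNZ hg0 a b (by omega) (by omega) hab)
  simpa using Fintype.card_le_of_injective _ hinj

end Paths

section Main
variable {S : Type*} {trans : Set (S × ℕ × PMF S)} {Φ₁ Φ₂ : S → Prop}

lemma main_le [Fintype S]
    (htotal : ∀ s : S, ∃ d ν, (s, d, ν) ∈ trans)
    (hNZ : ∀ (n : ℕ) (p : Fin (n + 1) → S) (d : Fin n → ℕ), 0 < n →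
      IsTMDPPath trans n p d → p 0 = p (Fin.last n) → 0 < ∑ k, d k)
    {g : S → ℕ∞} (gfix : ∀ s, Fop trans Φ₁ Φ₂ g s = g s) :
    ∀ (j m : ℕ), m + j = Fintype.card S → ∀ (p : ℕ → S) (dd : ℕ → ℕ),
      GoodPath trans g m p dd → g (p 0) ≠ ⊤ →
      betaIter trans Φ₁ Φ₂ j (p m) ≤ g (p m) := by
  intro j
  induction j with
  | zero =>
    intro m hm p dd hgp hg0
    exact absurd (hgp.card_bound hNZ hg0) (by omega)
  | succ j ih =>
    intro m hm p dd hgp hg0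
    set s := p m with hs
    by_cases hΦ2 : Φ₂ s
    · rw [betaIter_succ]; simp [Fop, hΦ2]
    have hgs : g s ≠ ⊤ := fun hh => hg0 (top_le_iff.1 (hh ▸ hgp.mono_g (Nat.zero_le m) le_rfl))
    have hΦ1 : Φ₁ s := by
      by_contra hΦ1
      apply hgs
      rw [← gfix s]; simp [Fop, hΦ2, hΦ1]
    obtain ⟨d₀, ν₀, htr₀, heq⟩ := attained trans g s (htotal s)
    have heq' : (d₀ : ℕ∞) + ⨆ s' ∈ ν₀.support, g s' = g s := by
      rw [heq, ← gfix s]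
      simp [Fop, hΦ2, hΦ1]
    have hsucc : ∀ s' ∈ ν₀.support, betaIter trans Φ₁ Φ₂ j s' ≤ g s' := by
      intro s' hs'
      have hgp' : GoodPath trans g (m + 1) (Function.update p (m + 1) s')
          (Function.update dd m d₀) := by
        constructor
        · intro k hk
          rcases Nat.lt_or_ge k m with hkm | hkm
          · obtain ⟨ν, h1, h2⟩ := hgp.1 k hkm
            refine ⟨ν, ?_, ?_⟩
            · rw [Function.update_of_ne (by omega), Function.update_of_ne (by omega)]
              exact h1
            · rw [Function.update_of_ne (by omega)]
              exact h2
          · have hk' : k = m := by omega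
            subst hk'
            refine ⟨ν₀, ?_, ?_⟩
            · rw [Function.update_of_ne (by omega), Function.update_self]
              exact htr₀
            · rw [Function.update_self]
              exact hs'
        · intro k hk
          rcases Nat.lt_or_ge k m with hkm | hkm
          · rw [Function.update_of_ne (by omega), Function.update_of_ne (by omega),
              Function.update_of_ne (by omega)]
            exact hgp.2 k hkm
          · have hk' : k = m := by omega
            subst hk'
            rw [Function.update_self, Function.update_self,
              Function.update_of_ne (by omega), ← hs]
            have hle : g s' ≤ ⨆ s' ∈ ν₀.support, g s' := le_iSup₂_of_le s' hs' le_rfl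
            exact le_trans (add_le_add_right hle _) heq'.le
      have hg0' : g (Function.update p (m + 1) s' 0) ≠ ⊤ := by
        rw [Function.update_of_ne (by omega)]
        exact hg0
      have hmain := ih (m + 1) (by omega) _ _ hgp' hg0'
      rwa [Function.update_self] at hmain
    rw [betaIter_succ]
    have h1 : Fop trans Φ₁ Φ₂ (betaIter trans Φ₁ Φ₂ j) s
        ≤ (d₀ : ℕ∞) + ⨆ s' ∈ ν₀.support, betaIter trans Φ₁ Φ₂ j s' := by
      simp only [Fop, hΦ2, hΦ1, if_false, not_true_eq_false, if_true]
      exact iInf_le_of_le d₀ (iInf_le_of_le ν₀ (iInf_le_of_le htr₀ le_rfl))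
    refine le_trans h1 (le_trans ?_ heq'.le)
    exact add_le_add_right (iSup_mono fun s' => iSup_mono fun hs' => hsucc s' hs') _

end Main


/-- For a structurally non-Zeno finite discrete TMDP, the `β`-iteration
stabilizes after `|S|` steps, and `β^{|S|}(s)` is exactly the least total duration of a
path prefix from `s` satisfying `Φ₁ U Φ₂` that player `P_n` can guarantee against all
strategies of `P_p` (value `∞`, i.e. no bound `D` works, if no such strategy exists). -/
theorem betaIter_stabilizes_and_is_game_value {S : Type*} [Fintype S]
    (trans : Set (S × ℕ × PMF S)) (Φ₁ Φ₂ : S → Prop)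
    (htotal : ∀ s : S, ∃ d ν, (s, d, ν) ∈ trans)
    (hNZ : ∀ (n : ℕ) (p : Fin (n + 1) → S) (d : Fin n → ℕ), 0 < n →
      IsTMDPPath trans n p d → p 0 = p (Fin.last n) → 0 < ∑ k, d k) :
    (∀ (k : ℕ) (s : S),
      betaIter trans Φ₁ Φ₂ (Fintype.card S + k) s
        = betaIter trans Φ₁ Φ₂ (Fintype.card S) s) ∧
    (∀ (s : S) (D : ℕ),
      NEnsure trans Φ₁ Φ₂ s D ↔ betaIter trans Φ₁ Φ₂ (Fintype.card S) s ≤ (D : ℕ∞)) := by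
  obtain ⟨I, hI⟩ := exists_stab trans Φ₁ Φ₂
  set g : S → ℕ∞ := betaIter trans Φ₁ Φ₂ I with hg
  have g_le : ∀ (i : ℕ) (s : S), g s ≤ betaIter trans Φ₁ Φ₂ i s := by
    intro i s
    rcases le_total i I with h | h
    · exact beta_anti trans Φ₁ Φ₂ h s
    · rw [hI i h s]
  have gfix : ∀ s, Fop trans Φ₁ Φ₂ g s = g s := by
    intro s
    have h := hI (I + 1) (by omega) s
    rw [← h, betaIter_succ]
  have hbn : ∀ s, betaIter trans Φ₁ Φ₂ (Fintype.card S) s = g s := by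
    intro s
    refine le_antisymm ?_ (g_le _ s)
    by_cases hgs : g s = ⊤
    · rw [hgs]; exact le_top
    · exact main_le htotal hNZ gfix (Fintype.card S) 0 (by omega) (fun _ => s) (fun _ => 0)
        ⟨fun k hk => absurd hk (by omega), fun k hk => absurd hk (by omega)⟩ hgs
  constructor
  · intro k s
    refine le_antisymm (beta_anti trans Φ₁ Φ₂ (Nat.le_add_right _ _) s) ?_
    rw [hbn s]
    exact g_le _ s
  · intro s D
    constructor
    · intro h
      rw [hbn s]
      exact g_le_of_ensure (fun s => g_le 0 s) gfix h
    · intro h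
      exact ensure_of_beta htotal _ s D h
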